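/- arXiv:1504.08191 — 2 statements merged into one kernel-verified Lean document; each statement's English description precedes it below -/
import Mathlib

section
/- If the hyperspace system (K(X), T_K) is pointwise minimal (every point of K(X) is an almost periodic point), then (X,T) is distal, i.e. the only proximal pairs are diagonal pairs. -/
open TopologicalSpace Metric Set

/-- The induced map `T_K` on the hyperspace of nonempty compact subsets. -/
noncomputable def inducedMap {X : Type*} [MetricSpace X] {T : X → X} (hT : Continuous T)
    (A : NonemptyCompacts X) : NonemptyCompacts X :=
  ⟨⟨T '' A, A.isCompact.image hT⟩, A.nonempty.image T⟩

/-- The (forward) orbit closure of a point. -/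
def orbitClosure {Y : Type*} [TopologicalSpace Y] (T : Y → Y) (x : Y) : Set Y :=
  closure (Set.range fun n : ℕ => T^[n] x)

/-- A point is minimal (almost periodic) if its orbit closure is a minimal set:
every point of the orbit closure has the original point in its own orbit closure. -/
def MinimalPt {Y : Type*} [TopologicalSpace Y] (T : Y → Y) (x : Y) : Prop :=
  ∀ y ∈ orbitClosure T x, x ∈ orbitClosure T y

/-- A pair is proximal if the orbits approach each other along a sequence of times
tending to infinity. -/
def ProximalPair {X : Type*} [MetricSpace X] (T : X → X) (x y : X) : Prop :=
  ∀ ε > (0:ℝ), ∀ N : ℕ, ∃ n ≥ N, dist (T^[n] x) (T^[n] y) < ε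

lemma inducedMap_iterate {X : Type*} [MetricSpace X] {T : X → X} (hT : Continuous T)
    (A : NonemptyCompacts X) (n : ℕ) :
    ((inducedMap hT)^[n] A : Set X) = T^[n] '' (A : Set X) := by
  induction n with
  | zero => simp
  | succ n ih =>
    rw [Function.iterate_succ_apply']
    show T '' ((inducedMap hT)^[n] A : Set X) = T^[n+1] '' (A : Set X)
    rw [ih, ← Set.image_comp, ← Function.iterate_succ']

theorem distal_of_pointwise_minimal_induced {X : Type*} [MetricSpace X] [CompactSpace X]
    (T : X → X) (hT : Continuous T) (hsurj : Function.Surjective T)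
    (h : ∀ A : NonemptyCompacts X, MinimalPt (inducedMap hT) A) :
    ∀ x y : X, ProximalPair T x y → x = y := by
  intro x y hxy
  -- choose times m k with dist < 1/(k+1)
  have hsel : ∀ k : ℕ, ∃ n ≥ k, dist (T^[n] x) (T^[n] y) < 1 / (k + 1) := fun k =>
    hxy (1 / (k + 1)) (by positivity) k
  choose m hm hdist using hsel
  -- subsequence converging
  obtain ⟨z, -, φ, hφ, hz⟩ := isCompact_univ.tendsto_subseq
    (fun k => (Set.mem_univ (T^[m k] x)))
  have hy : Filter.Tendsto (fun k => T^[m (φ k)] y) Filter.atTop (nhds z) := by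
    rw [tendsto_iff_dist_tendsto_zero] at hz ⊢
    have hb : ∀ k, dist (T^[m (φ k)] y) z ≤ 1 / (φ k + 1) + dist (T^[m (φ k)] x) z := by
      intro k
      calc dist (T^[m (φ k)] y) z ≤ dist (T^[m (φ k)] y) (T^[m (φ k)] x) + dist (T^[m (φ k)] x) z :=
            dist_triangle _ _ _
        _ ≤ 1 / (φ k + 1) + dist (T^[m (φ k)] x) z := by
            have := hdist (φ k)
            rw [dist_comm]
            linarith
    have h1 : Filter.Tendsto (fun k : ℕ => 1 / ((φ k : ℝ) + 1) + dist (T^[m (φ k)] x) z)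
        Filter.atTop (nhds 0) := by
      have : Filter.Tendsto (fun k : ℕ => 1 / ((φ k : ℝ) + 1)) Filter.atTop (nhds 0) := by
        apply tendsto_one_div_add_atTop_nhds_zero_nat.comp
        exact hφ.tendsto_atTop
      simpa using this.add hz
    exact squeeze_zero (fun k => dist_nonneg) hb h1
  set A : NonemptyCompacts X := ⟨⟨{x, y}, ((Set.finite_singleton y).insert x).isCompact⟩, ⟨x, by simp⟩⟩
  set Z : NonemptyCompacts X := ⟨⟨{z}, isCompact_singleton⟩, ⟨z, rfl⟩⟩
  have hZmem : Z ∈ orbitClosure (inducedMap hT) A := by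
    rw [orbitClosure, Metric.mem_closure_iff]
    intro ε hε
    rw [Metric.tendsto_atTop] at hz hy
    obtain ⟨K1, hK1⟩ := hz (ε/2) (by linarith)
    obtain ⟨K2, hK2⟩ := hy (ε/2) (by linarith)
    let k := max K1 K2
    refine ⟨_, ⟨m (φ k), rfl⟩, ?_⟩
    rw [NonemptyCompacts.dist_eq]
    have hcar : ((inducedMap hT)^[m (φ k)] A : Set X) = {T^[m (φ k)] x, T^[m (φ k)] y} := by
      rw [inducedMap_iterate]
      show T^[m (φ k)] '' {x, y} = _
      simp [Set.image_insert_eq]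
    have h1 : dist (T^[m (φ k)] x) z < ε/2 := hK1 k (le_max_left _ _)
    have h2 : dist (T^[m (φ k)] y) z < ε/2 := hK2 k (le_max_right _ _)
    have : hausdorffDist (Z : Set X) (((inducedMap hT)^[m (φ k)] A : Set X)) ≤ ε/2 := by
      apply hausdorffDist_le_of_mem_dist (by linarith)
      · intro a ha
        rw [show (Z : Set X) = {z} from rfl, Set.mem_singleton_iff] at ha
        subst ha
        exact ⟨T^[m (φ k)] x, by rw [hcar]; simp, by rw [dist_comm]; linarith⟩
      · intro b hb
        rw [hcar] at hb
        refine ⟨z, rfl, ?_⟩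
        rcases hb with hb | hb <;> subst hb
        · linarith
        · linarith
    calc hausdorffDist (Z : Set X) _ ≤ ε/2 := this
      _ < ε := by linarith
  have hAmem : A ∈ orbitClosure (inducedMap hT) Z := h A Z hZmem
  apply eq_of_forall_dist_le
  intro ε hε
  rw [orbitClosure, Metric.mem_closure_iff] at hAmem
  obtain ⟨B, ⟨n, rfl⟩, hB⟩ := hAmem (ε/2) (by linarith)
  rw [NonemptyCompacts.dist_eq] at hB
  change hausdorffDist (A : Set X) (((inducedMap hT)^[n] Z : Set X)) < ε/2 at hB
  have hcar : ((inducedMap hT)^[n] Z : Set X) = {T^[n] z} := by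
    rw [inducedMap_iterate]
    show T^[n] '' {z} = _
    rw [Set.image_singleton]
  have hfin : EMetric.hausdorffEdist (A : Set X) ((inducedMap hT)^[n] Z : Set X) ≠ ⊤ :=
    hausdorffEdist_ne_top_of_nonempty_of_bounded A.nonempty ((inducedMap hT)^[n] Z).nonempty
      A.isCompact.isBounded ((inducedMap hT)^[n] Z).isCompact.isBounded
  have hx' : ∃ b ∈ ((inducedMap hT)^[n] Z : Set X), dist x b < ε/2 :=
    exists_dist_lt_of_hausdorffDist_lt (by show x ∈ ({x, y} : Set X); simp) hB hfin
  have hy' : ∃ b ∈ ((inducedMap hT)^[n] Z : Set X), dist y b < ε/2 :=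
    exists_dist_lt_of_hausdorffDist_lt (by show y ∈ ({x, y} : Set X); simp) hB hfin
  obtain ⟨b1, hb1, hxb⟩ := hx'
  obtain ⟨b2, hb2, hyb⟩ := hy'
  rw [hcar, Set.mem_singleton_iff] at hb1 hb2
  subst hb1; subst hb2
  calc dist x y ≤ dist x (T^[n] z) + dist (T^[n] z) y := dist_triangle _ _ _
    _ ≤ ε := by rw [dist_comm (T^[n] z) y]; linarith
end

section
/- If the hyperspace system (K(X), T_K) has a dense set of positively recurrent points then (X,T) has a dense set of recurrent points. -/
open TopologicalSpace Metric Set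

attribute [local instance] Ultrafilter.add Ultrafilter.addSemigroup

/-- A point `x` is positively recurrent for `T`. -/
def RecurrentPt {Y : Type*} [MetricSpace Y] (T : Y → Y) (x : Y) : Prop :=
  ∀ ε > (0:ℝ), ∀ N : ℕ, ∃ n ≥ N, dist (T^[n] x) x < ε

section aux

variable {X : Type*} [MetricSpace X] [CompactSpace X] {T : X → X}

lemma inducedMap_iterate_coe (hT : Continuous T) (A : NonemptyCompacts X) (n : ℕ) :
    (((inducedMap hT)^[n] A : NonemptyCompacts X) : Set X) = T^[n] '' A := by
  induction n with
  | zero => simp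
  | succ n ih =>
    rw [Function.iterate_succ_apply']
    show T '' _ = _
    rw [ih, Function.iterate_succ', Set.image_comp]

/-- A simultaneous modulus of uniform continuity for all `T^[n]`, `n ≤ K`. -/
lemma mod_exists (hT : Continuous T) (K : ℕ) {ε : ℝ} (hε : 0 < ε) :
    ∃ η > 0, ∀ n ≤ K, ∀ u v : X, dist u v ≤ η → dist (T^[n] u) (T^[n] v) ≤ ε := by
  induction K with
  | zero =>
    refine ⟨ε, hε, ?_⟩
    intro n hn u v huv
    interval_cases n
    simpa using huv
  | succ K ih =>
    obtain ⟨η₀, hη₀, h₀⟩ := ih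
    have hc : Continuous (T^[K+1]) := hT.iterate (K+1)
    have huc := CompactSpace.uniformContinuous_of_continuous hc
    obtain ⟨δ, hδ, hδ'⟩ := Metric.uniformContinuous_iff.mp huc ε hε
    refine ⟨min η₀ (δ/2), lt_min hη₀ (by linarith), ?_⟩
    intro n hn u v huv
    rcases Nat.lt_succ_iff_lt_or_eq.mp (Nat.lt_succ_of_le hn) with h | h
    · exact h₀ n (Nat.lt_succ_iff.mp h) u v (huv.trans (min_le_left _ _))
    · subst h
      exact le_of_lt (hδ' (lt_of_le_of_lt (huv.trans (min_le_right _ _)) (by linarith)))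

lemma hdist_image_le {g : X → X} {s t : Set X} (hs : IsCompact s) (hsn : s.Nonempty)
    (ht : IsCompact t) (htn : t.Nonempty) {η ε : ℝ} (hε : 0 < ε)
    (hmod : ∀ u v : X, dist u v ≤ η → dist (g u) (g v) ≤ ε)
    (hd : hausdorffDist s t ≤ η) :
    hausdorffDist (g '' s) (g '' t) ≤ ε := by
  have fin : EMetric.hausdorffEdist s t ≠ ⊤ :=
    Metric.hausdorffEdist_ne_top_of_nonempty_of_bounded hsn htn hs.isBounded ht.isBounded
  have fin' : EMetric.hausdorffEdist t s ≠ ⊤ := by unfold EMetric.hausdorffEdist at fin ⊢; rwa [Metric.hausdorffEDist_comm]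
  apply Metric.hausdorffDist_le_of_mem_dist hε.le
  · rintro _ ⟨u, hu, rfl⟩
    obtain ⟨v, hv, hvd⟩ := ht.exists_infDist_eq_dist htn u
    have : dist u v ≤ η := by
      rw [← hvd]
      exact (Metric.infDist_le_hausdorffDist_of_mem hu fin).trans hd
    exact ⟨g v, Set.mem_image_of_mem g hv, hmod u v this⟩
  · rintro _ ⟨u, hu, rfl⟩
    obtain ⟨v, hv, hvd⟩ := hs.exists_infDist_eq_dist hsn u
    have : dist u v ≤ η := by
      rw [← hvd]
      refine (Metric.infDist_le_hausdorffDist_of_mem hu fin').trans ?_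
      rwa [Metric.hausdorffDist_comm]
    exact ⟨g v, Set.mem_image_of_mem g hv, hmod u v this⟩

end aux

theorem dense_recurrent_of_dense_recurrent_induced {X : Type*} [MetricSpace X]
    [CompactSpace X] (T : X → X) (hT : Continuous T) (hsurj : Function.Surjective T)
    (h : Dense {A : NonemptyCompacts X | RecurrentPt (inducedMap hT) A}) :
    Dense {x : X | RecurrentPt T x} := by
  rw [Metric.dense_iff]
  intro x r hr
  set ε : ℝ := r/2 with hεdef
  have hε : 0 < ε := by positivity
  set δ0 : ℝ := ε/2 with hδ0def
  have hδ0 : 0 < δ0 := by positivity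
  -- find a recurrent compact set close to {x}
  have hx : ({⟨⟨{x}, isCompact_singleton⟩, Set.singleton_nonempty x⟩} : Set (NonemptyCompacts X)) ⊆ Set.univ := by simp
  obtain ⟨A, hAx, hArec⟩ := Metric.dense_iff.mp h
    ⟨⟨{x}, isCompact_singleton⟩, Set.singleton_nonempty x⟩ (δ0/2) (by positivity)
  rw [Set.mem_setOf_eq] at hArec
  rw [Metric.mem_ball] at hAx
  -- basic facts about A
  have hAfinx : EMetric.hausdorffEdist (A : Set X) ({x} : Set X) ≠ ⊤ :=
    Metric.hausdorffEdist_ne_top_of_nonempty_of_bounded A.nonempty (Set.singleton_nonempty x)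
      A.isCompact.isBounded isCompact_singleton.isBounded
  have hAnear : ∀ a ∈ (A : Set X), dist a x ≤ δ0/2 := by
    intro a ha
    have := Metric.infDist_le_hausdorffDist_of_mem ha hAfinx
    rw [Metric.infDist_singleton] at this
    have hd : hausdorffDist (A : Set X) ({x} : Set X) < δ0/2 := by
      rw [NonemptyCompacts.dist_eq] at hAx
      exact hAx
    linarith
  -- recurrence of A restated
  have hrec : ∀ δ > (0:ℝ), ∀ N : ℕ, ∃ n ≥ N, hausdorffDist (T^[n] '' (A : Set X)) (A : Set X) < δ := by
    intro δ hδ N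
    obtain ⟨n, hn, hd⟩ := hArec δ hδ N
    refine ⟨n, hn, ?_⟩
    rw [NonemptyCompacts.dist_eq, inducedMap_iterate_coe] at hd
    exact hd
  set e : ℕ → ℝ := fun k => δ0 * (1/2)^(k+1) with hedef
  have he : ∀ k, 0 < e k := fun k => by positivity
  have finA : ∀ n : ℕ, EMetric.hausdorffEdist (T^[n] '' (A : Set X)) (A : Set X) ≠ ⊤ := by
    intro n
    exact Metric.hausdorffEdist_ne_top_of_nonempty_of_bounded (A.nonempty.image _) A.nonempty
      (A.isCompact.image (hT.iterate n)).isBounded A.isCompact.isBounded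
  -- key inductive choice
  have key : ∀ k K : ℕ, ∃ m : ℕ, 1 ≤ m ∧ k ≤ m ∧
      hausdorffDist (T^[m] '' (A : Set X)) (A : Set X) ≤ e k ∧
      ∀ n ≤ K, hausdorffDist (T^[n] '' (T^[m] '' (A : Set X))) (T^[n] '' (A : Set X)) ≤ e k := by
    intro k K
    obtain ⟨η, hη, hmod⟩ := mod_exists hT K (he k)
    obtain ⟨m, hm, hmd⟩ := hrec (min (e k) η) (lt_min (he k) hη) (max k 1)
    refine ⟨m, le_trans (le_max_right k 1) hm, le_trans (le_max_left k 1) hm,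
      (hmd.le.trans (min_le_left _ _)), ?_⟩
    intro n hn
    exact hdist_image_le (A.isCompact.image (hT.iterate m)) (A.nonempty.image _)
      A.isCompact A.nonempty (he k) (hmod n hn) (hmd.le.trans (min_le_right _ _))
  choose μ hμ1 hμ2 hμ3 hμ4 using key
  -- state machine building the generators
  set F : ℕ → ℕ × ℕ := fun n => (fun s : ℕ × ℕ => (s.1 + 1, s.2 + μ s.1 s.2))^[n] (0, 0) with hFdef
  set m : ℕ → ℕ := fun k => μ (F k).1 (F k).2 with hmdef
  have hFsucc : ∀ k : ℕ, F (k+1) = ((F k).1 + 1, (F k).2 + μ (F k).1 (F k).2) :=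
    fun k => Function.iterate_succ_apply' _ k (0, 0)
  have hF1 : ∀ k, (F k).1 = k := by
    intro k
    induction k with
    | zero => simp [hFdef]
    | succ k ih => rw [hFsucc]; simp [ih]
  have hFK : ∀ k, (F k).2 = ∑ i ∈ Finset.range k, m i := by
    intro k
    induction k with
    | zero => simp [hFdef]
    | succ k ih =>
      rw [hFsucc]
      simp only
      rw [Finset.sum_range_succ, ← ih, hmdef]
  have hmeq : ∀ k, m k = μ k (F k).2 := by
    intro k
    simp only [hmdef]
    rw [hF1]
  have hm1 : ∀ k, 1 ≤ m k := fun k => by rw [hmeq]; exact hμ1 _ _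
  have hmk : ∀ k, k ≤ m k := fun k => by
    rw [hmeq]; exact hμ2 _ _
  have hmd : ∀ k, hausdorffDist (T^[m k] '' (A : Set X)) (A : Set X) ≤ e k := fun k => by
    rw [hmeq]; exact hμ3 _ _
  have hmd4 : ∀ k, ∀ n ≤ ∑ i ∈ Finset.range k, m i,
      hausdorffDist (T^[n] '' (T^[m k] '' (A : Set X))) (T^[n] '' (A : Set X)) ≤ e k := by
    intro k n hn
    rw [hmeq]
    exact hμ4 k (F k).2 n (by rw [hFK]; exact hn)
  -- all finite sums are good
  have good : ∀ k : ℕ, ∀ α : Finset ℕ, (∀ i ∈ α, i ≤ k) → k ∈ α →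
      hausdorffDist (T^[∑ i ∈ α, m i] '' (A : Set X)) (A : Set X) ≤ ∑ i ∈ α, e i := by
    intro k
    induction k using Nat.strong_induction_on with
    | _ k IH =>
      intro α hub hk
      have hsm : ∑ i ∈ α, m i = m k + ∑ i ∈ α.erase k, m i := (Finset.add_sum_erase α m hk).symm
      have hse : ∑ i ∈ α, e i = e k + ∑ i ∈ α.erase k, e i := (Finset.add_sum_erase α e hk).symm
      rcases (α.erase k).eq_empty_or_nonempty with hemp | hne
      · rw [hsm, hse, hemp]
        simpa using hmd k
      · set j := (α.erase k).max' hne with hjdef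
        have hjmem : j ∈ α.erase k := (α.erase k).max'_mem hne
        have hjk : j < k := by
          have h1 : j ≠ k := Finset.ne_of_mem_erase hjmem
          have h2 : j ≤ k := hub j (Finset.mem_of_mem_erase hjmem)
          omega
        have hIH := IH j hjk (α.erase k) (fun i hi => (α.erase k).le_max' i hi) hjmem
        set S' := ∑ i ∈ α.erase k, m i with hS'def
        have hS'le : S' ≤ ∑ i ∈ Finset.range k, m i := by
          apply Finset.sum_le_sum_of_subset
          intro i hi
          rw [Finset.mem_range]
          exact lt_of_le_of_lt ((α.erase k).le_max' i hi) hjk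
        have himg : T^[∑ i ∈ α, m i] '' (A : Set X) = T^[S'] '' (T^[m k] '' (A : Set X)) := by
          rw [hsm, Nat.add_comm, Function.iterate_add, Set.image_comp]
        rw [himg, hse]
        have fin1 : EMetric.hausdorffEdist (T^[S'] '' (T^[m k] '' (A : Set X)))
            (T^[S'] '' (A : Set X)) ≠ ⊤ := by
          apply Metric.hausdorffEdist_ne_top_of_nonempty_of_bounded
            ((A.nonempty.image _).image _) (A.nonempty.image _)
            (((A.isCompact.image (hT.iterate (m k))).image (hT.iterate S')).isBounded)
            ((A.isCompact.image (hT.iterate S')).isBounded)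
        calc hausdorffDist (T^[S'] '' (T^[m k] '' (A : Set X))) (A : Set X)
            ≤ hausdorffDist (T^[S'] '' (T^[m k] '' (A : Set X))) (T^[S'] '' (A : Set X)) +
              hausdorffDist (T^[S'] '' (A : Set X)) (A : Set X) :=
              Metric.hausdorffDist_triangle fin1
          _ ≤ e k + ∑ i ∈ α.erase k, e i := add_le_add (hmd4 k S' hS'le) hIH
  have esum : ∀ α : Finset ℕ, ∑ i ∈ α, e i ≤ δ0 := by
    intro α
    rcases α.eq_empty_or_nonempty with rfl | hne
    · simpa using hδ0.le
    · set n := α.max' hne + 1 with hn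
      have hsub : α ⊆ Finset.range n := by
        intro i hi
        rw [Finset.mem_range]
        exact Nat.lt_succ_of_le (α.le_max' i hi)
      have h1 : ∑ i ∈ α, e i ≤ ∑ i ∈ Finset.range n, e i :=
        Finset.sum_le_sum_of_subset_of_nonneg hsub (fun i _ _ => (he i).le)
      have h2 : ∑ i ∈ Finset.range n, e i = δ0 * ((1/2 : ℝ) * ∑ i ∈ Finset.range n, (1/2)^i) := by
        rw [Finset.mul_sum, Finset.mul_sum]
        congr 1
        ext i
        ring
      have h3 : (∑ i ∈ Finset.range n, (1/2 : ℝ)^i) ≤ 2 := sum_geometric_two_le n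
      calc ∑ i ∈ α, e i ≤ δ0 * ((1/2 : ℝ) * ∑ i ∈ Finset.range n, (1/2)^i) := h1.trans_eq h2
        _ ≤ δ0 * ((1/2) * 2) := by
            apply mul_le_mul_of_nonneg_left _ hδ0.le
            apply mul_le_mul_of_nonneg_left h3 (by norm_num)
        _ = δ0 := by ring
  -- representation of finite sums
  have rep : ∀ (b : Stream' ℕ) (S : ℕ), S ∈ Hindman.FS b →
      ∃ α : Finset ℕ, α.Nonempty ∧ S = ∑ i ∈ α, b.get i := by
    intro b S hS
    induction hS with
    | head' a => exact ⟨{0}, ⟨0, Finset.mem_singleton_self 0⟩, by simp [Stream'.head]⟩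
    | tail' a c hc ih =>
      obtain ⟨α, hne, rfl⟩ := ih
      refine ⟨α.image (· + 1), hne.image _, ?_⟩
      rw [Finset.sum_image (fun x _ y _ h => by simpa using h)]
      rfl
    | cons' a c hc ih =>
      obtain ⟨α, hne, rfl⟩ := ih
      refine ⟨insert 0 (α.image (· + 1)), Finset.insert_nonempty _ _, ?_⟩
      rw [Finset.sum_insert (by simp)]
      rw [Finset.sum_image (fun x _ y _ h => by simpa using h)]
      rfl
  set mst : Stream' ℕ := m with hmst
  have goodS : ∀ S ∈ Hindman.FS mst, hausdorffDist (T^[S] '' (A : Set X)) (A : Set X) ≤ δ0 ∧ 1 ≤ S := by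
    intro S hS
    obtain ⟨α, hne, rfl⟩ := rep mst S hS
    have hget : ∀ i, mst.get i = m i := fun i => rfl
    constructor
    · have := good (α.max' hne) α (fun i hi => α.le_max' i hi) (α.max'_mem hne)
      simp only [hget]
      exact this.trans (esum α)
    · calc 1 ≤ m (α.max' hne) := hm1 _
        _ ≤ ∑ i ∈ α, mst.get i :=
          Finset.single_le_sum (fun i _ => Nat.zero_le _) (α.max'_mem hne)
  -- Hindman: idempotent ultrafilter containing FS
  obtain ⟨U, hUidem, hUFS⟩ := Hindman.exists_idempotent_ultrafilter_le_FS mst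
  -- U is nonprincipal
  have hUcof : (U : Filter ℕ) ≤ Filter.cofinite := by
    rcases U.le_cofinite_or_eq_pure with hc | ⟨a, rfl⟩
    · exact hc
    · exfalso
      have haa : a + a = a := by
        have h1 : (∀ᶠ n in ↑((pure a : Ultrafilter ℕ) + pure a), n = a + a) ↔
            ∀ᶠ n in (pure a : Ultrafilter ℕ), ∀ᶠ n' in (pure a : Ultrafilter ℕ), n + n' = a + a :=
          Ultrafilter.eventually_add (pure a) (pure a) (fun n => n = a + a)
        have h2 : ∀ᶠ n in ↑((pure a : Ultrafilter ℕ) + pure a), n = a + a := by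
          rw [h1]
          simp
        rw [hUidem] at h2
        have h3 : a = a + a := h2
        omega
      have ha0 : a = 0 := by omega
      subst ha0
      have h0 : (0 : ℕ) ∈ Hindman.FS mst := hUFS
      have := (goodS 0 h0).2
      omega
  have hlarge : ∀ N : ℕ, {n : ℕ | N ≤ n} ∈ U := by
    intro N
    apply hUcof
    rw [Filter.mem_cofinite]
    have : {n : ℕ | N ≤ n}ᶜ = {n : ℕ | n < N} := by ext n; simp
    rw [this]
    exact Set.finite_lt_nat N
  -- the limit point
  obtain ⟨a0, ha0⟩ := A.nonempty
  set f : ℕ → X := fun n => T^[n] a0 with hfdef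
  obtain ⟨y, -, hy⟩ := isCompact_univ.ultrafilter_le_nhds (U.map f)
    (by rw [Filter.le_principal_iff]; exact Filter.univ_mem)
  have htend : Filter.Tendsto f (U : Filter ℕ) (nhds y) := hy
  -- y is close to x
  have hfS : ∀ S ∈ Hindman.FS mst, f S ∈ closedBall x ε := by
    intro S hS
    have hfin := finA S
    have h1 : Metric.infDist (f S) (A : Set X) ≤ δ0 := by
      refine le_trans (Metric.infDist_le_hausdorffDist_of_mem ?_ hfin) (goodS S hS).1
      exact Set.mem_image_of_mem _ ha0
    obtain ⟨b, hb, hbd⟩ := A.isCompact.exists_infDist_eq_dist A.nonempty (f S)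
    have h2 : dist (f S) b ≤ δ0 := by rw [← hbd]; exact h1
    have h3 : dist b x ≤ δ0/2 := hAnear b hb
    rw [Metric.mem_closedBall]
    calc dist (f S) x ≤ dist (f S) b + dist b x := dist_triangle _ _ _
      _ ≤ δ0 + δ0/2 := add_le_add h2 h3
      _ ≤ ε := by rw [hδ0def]; linarith
  have hyx : y ∈ closedBall x ε := by
    refine Metric.isClosed_closedBall.mem_of_tendsto htend ?_
    filter_upwards [hUFS] with S hS
    exact hfS S hS
  -- y is recurrent
  have hyrec : RecurrentPt T y := by
    intro ε₂ hε₂ N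
    have hB : {n : ℕ | f n ∈ ball y (ε₂/2)} ∈ U :=
      htend (Metric.ball_mem_nhds y (by linarith))
    have hD : ∀ᶠ n in (U : Filter ℕ), ∀ᶠ n' in (U : Filter ℕ), f (n + n') ∈ ball y (ε₂/2) := by
      have := (Ultrafilter.eventually_add U U (fun n => f n ∈ ball y (ε₂/2))).mp
      apply this
      rw [hUidem]
      exact hB
    have hDgood : ∀ n : ℕ, (∀ᶠ n' in (U : Filter ℕ), f (n + n') ∈ ball y (ε₂/2)) →
        dist (T^[n] y) y ≤ ε₂/2 := by
      intro n hn
      have htend2 : Filter.Tendsto (fun n' => T^[n] (f n')) (U : Filter ℕ) (nhds (T^[n] y)) :=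
        (((hT.iterate n).tendsto y).comp htend)
      have : T^[n] y ∈ closedBall y (ε₂/2) := by
        refine Metric.isClosed_closedBall.mem_of_tendsto htend2 ?_
        filter_upwards [hn] with n' hn'
        have : T^[n] (f n') = f (n + n') := by
          rw [hfdef]
          simp only
          rw [← Function.iterate_add_apply]
        rw [this]
        exact ball_subset_closedBall hn'
      rwa [Metric.mem_closedBall] at this
    obtain ⟨n, hn1, hn2⟩ : ∃ n, (∀ᶠ n' in (U : Filter ℕ), f (n + n') ∈ ball y (ε₂/2)) ∧ N ≤ n := by
      have := Filter.Eventually.and hD (hlarge N)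
      exact this.exists
    exact ⟨n, hn2, lt_of_le_of_lt (hDgood n hn1) (by linarith)⟩
  refine ⟨y, Metric.mem_ball.mpr ?_, hyrec⟩
  have : dist y x ≤ ε := Metric.mem_closedBall.mp hyx
  rw [hεdef] at this
  linarith
end
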